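/- The simple graph G on vertex set {1,2,3,4,5,6,7} with edge set {{1,2},{1,4},{1,5},{2,3},{2,6},{2,7},{3,4},{3,5},{4,5},{5,6},{5,7},{6,7}} (graph number 995 in the Atlas of Graphs) has minimum rank 3 over the real numbers. -/

import Mathlib

open Matrix

/-- Edge list of graph number 995 in the Atlas of Graphs (vertices 1..7). -/
def atlas995Edges : List (ℕ × ℕ) := [(1,2),(1,4),(1,5),(2,3),(2,6),(2,7),(3,4),(3,5),(4,5),(5,6),(5,7),(6,7)]


noncomputable def B995 : Matrix (Fin 3) (Fin 7) ℝ :=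
  !![1,1,0,1,1,0,0; 0,-1,1,1,2,0,0; 0,1,0,0,1,1,1]

lemma lower995 (A : Matrix (Fin 7) (Fin 7) ℝ)
    (hp : ∀ i j : Fin 7, i ≠ j →
          (A i j ≠ 0 ↔
            ((i.val + 1, j.val + 1) ∈ atlas995Edges ∨
             (j.val + 1, i.val + 1) ∈ atlas995Edges))) :
    3 ≤ A.rank := by
  have hz : ∀ i j : Fin 7, i ≠ j →
      ¬(((i.val + 1, j.val + 1) ∈ atlas995Edges ∨
         (j.val + 1, i.val + 1) ∈ atlas995Edges)) → A i j = 0 := by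
    intro i j hij hm
    by_contra h
    exact hm ((hp i j hij).mp h)
  have h10 : A 1 0 ≠ 0 := (hp 1 0 (by decide)).mpr (by decide)
  have h23 : A 2 3 ≠ 0 := (hp 2 3 (by decide)).mpr (by decide)
  have h56 : A 5 6 ≠ 0 := (hp 5 6 (by decide)).mpr (by decide)
  have z20 : A 2 0 = 0 := hz 2 0 (by decide) (by decide)
  have z50 : A 5 0 = 0 := hz 5 0 (by decide) (by decide)
  have z13 : A 1 3 = 0 := hz 1 3 (by decide) (by decide)
  have z53 : A 5 3 = 0 := hz 5 3 (by decide) (by decide)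
  have z26 : A 2 6 = 0 := hz 2 6 (by decide) (by decide)
  set S : Matrix (Fin 3) (Fin 7) ℝ := A.submatrix ![1,2,5] id with hS
  have hrange : Set.range S ⊆ Set.range A := by
    rintro _ ⟨i, rfl⟩
    exact ⟨![1,2,5] i, rfl⟩
  have hle : S.rank ≤ A.rank := by
    rw [Matrix.rank_eq_finrank_span_row, Matrix.rank_eq_finrank_span_row]
    exact Submodule.finrank_mono (Submodule.span_mono hrange)
  have hli : LinearIndependent ℝ S.row := by
    rw [Fintype.linearIndependent_iff]
    intro g hg
    have e0 := congrFun hg 0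
    have e3 := congrFun hg 3
    have e6 := congrFun hg 6
    simp only [Finset.sum_apply, Pi.smul_apply, Matrix.row_apply] at e0 e3 e6
    simp [hS, Fin.sum_univ_three, Matrix.submatrix_apply] at e0 e3 e6
    rw [z20, z50] at e0
    rw [z13, z53] at e3
    rw [z26] at e6
    simp at e0 e3 e6
    have hg0 : g 0 = 0 := by
      rcases e0 with h | h
      · exact h
      · exact absurd h h10
    have hg1 : g 1 = 0 := by
      rcases e3 with h | h
      · exact h
      · exact absurd h h23
    have hg2 : g 2 = 0 := by
      rw [hg0] at e6
      simp [mul_eq_zero] at e6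
      rcases e6 with h | h
      · exact h
      · exact absurd h h56
    intro i
    fin_cases i <;> assumption
  have hrk : S.rank = 3 := by
    rw [hli.rank_matrix]
    simp
  omega

lemma vec7_at5 (a b c d e f g : ℝ) : ![a,b,c,d,e,f,g] 5 = f := rfl
lemma vec7_at6 (a b c d e f g : ℝ) : ![a,b,c,d,e,f,g] 6 = g := rfl

lemma pattern995 : ∀ i j : Fin 7, i ≠ j →
    ((B995ᵀ * B995) i j ≠ 0 ↔
      ((i.val + 1, j.val + 1) ∈ atlas995Edges ∨
       (j.val + 1, i.val + 1) ∈ atlas995Edges)) := by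
  intro i j hij
  fin_cases i <;> fin_cases j <;>
    simp_all [B995, Matrix.mul_apply, Fin.sum_univ_succ, vec7_at5, vec7_at6, atlas995Edges] <;> norm_num

/-- Graph number 995 in the Atlas of Graphs has minimum rank 3 over the reals:
3 is the least element of the set of ranks of real symmetric 7×7 matrices whose
off-diagonal zero/nonzero pattern matches the edges of the graph. -/
theorem atlas995_minRank_eq_three :
    IsLeast {r : ℕ | ∃ A : Matrix (Fin 7) (Fin 7) ℝ, A.IsSymm ∧
        (∀ i j : Fin 7, i ≠ j →
          (A i j ≠ 0 ↔
            ((i.val + 1, j.val + 1) ∈ atlas995Edges ∨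
             (j.val + 1, i.val + 1) ∈ atlas995Edges))) ∧
        A.rank = r} 3 := by
  constructor
  · refine ⟨B995ᵀ * B995, ?_, pattern995, ?_⟩
    · simp [Matrix.IsSymm, Matrix.transpose_mul]
    refine le_antisymm ?_ (lower995 _ pattern995)
    calc (B995ᵀ * B995).rank ≤ B995.rank := Matrix.rank_mul_le_right _ _
      _ ≤ Fintype.card (Fin 3) := Matrix.rank_le_card_height _
      _ = 3 := by simp
  · rintro r ⟨A, hsym, hp, rfl⟩
    exact lower995 A hp
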